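/- Let n, d ∈ ℕ with d ≤ n and S ⊆ [n]. Then A_{d(S)} · Z_{d(S)} = Z_d. Consequently Z_{d(S)} is invertible and Z_{d(S)}^{-1} = Z_d^{-1} A_{d(S)}. -/

import Mathlib

open Finset Matrix

/-- The matrix `Z_{d(S)}` with entries 1 if `I ⊆ J △ S` and 0 otherwise. -/
noncomputable def ZdS (n d : ℕ) (S : Finset (Fin n)) :
    Matrix {J : Finset (Fin n) // J.card ≤ d} {J : Finset (Fin n) // J.card ≤ d} ℝ :=
  Matrix.of fun I J =>
    if (I : Finset (Fin n)) ⊆ symmDiff (J : Finset (Fin n)) S then 1 else 0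

/-- The matrix `A_{d(S)}` with entries `(-1)^{|K ∩ S|}` if `I \ S ⊆ K ⊆ I` and 0 otherwise. -/
noncomputable def AdS (n d : ℕ) (S : Finset (Fin n)) :
    Matrix {J : Finset (Fin n) // J.card ≤ d} {J : Finset (Fin n) // J.card ≤ d} ℝ :=
  Matrix.of fun I K =>
    if (I : Finset (Fin n)) \ S ⊆ (K : Finset (Fin n)) ∧ (K : Finset (Fin n)) ⊆ (I : Finset (Fin n))
    then (-1 : ℝ) ^ ((K : Finset (Fin n)) ∩ S).card else 0

/-- The matrix `Z_d` with entries 1 if `I ⊆ J` and 0 otherwise. -/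
noncomputable def Zd (n d : ℕ) :
    Matrix {J : Finset (Fin n) // J.card ≤ d} {J : Finset (Fin n) // J.card ≤ d} ℝ :=
  Matrix.of fun I J => if (I : Finset (Fin n)) ⊆ (J : Finset (Fin n)) then 1 else 0

/-- Left inverse of `Zd` (Möbius matrix). -/
noncomputable def Bmat (n d : ℕ) :
    Matrix {J : Finset (Fin n) // J.card ≤ d} {J : Finset (Fin n) // J.card ≤ d} ℝ :=
  Matrix.of fun I J => if (I : Finset (Fin n)) ⊆ (J : Finset (Fin n))
    then (-1 : ℝ) ^ (((J : Finset (Fin n)) \ (I : Finset (Fin n))).card) else 0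

lemma sum_neg_one_pow_real {n : ℕ} (U : Finset (Fin n)) :
    ∑ T ∈ U.powerset, (-1 : ℝ) ^ T.card = if U = ∅ then 1 else 0 := by
  have h := Finset.sum_powerset_neg_one_pow_card (x := U)
  have : ((∑ T ∈ U.powerset, (-1 : ℤ) ^ T.card : ℤ) : ℝ)
      = ∑ T ∈ U.powerset, (-1 : ℝ) ^ T.card := by push_cast; rfl
  rw [← this, h]
  split_ifs <;> norm_num

lemma subtype_sum (n d : ℕ) (f : Finset (Fin n) → ℝ)
    (h : ∀ K : Finset (Fin n), ¬ K.card ≤ d → f K = 0) :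
    ∑ K : {J : Finset (Fin n) // J.card ≤ d}, f ↑K = ∑ K : Finset (Fin n), f K := by
  rw [← Finset.sum_subtype (Finset.univ.filter fun K : Finset (Fin n) => K.card ≤ d)
    (by simp) f]
  refine Finset.sum_subset (Finset.filter_subset _ _) ?_
  intro K _ hK
  exact h K (by simpa using hK)

lemma mulAZ (n d : ℕ) (S : Finset (Fin n)) : AdS n d S * ZdS n d S = Zd n d := by
  ext I J
  simp only [mul_apply, AdS, ZdS, Zd, of_apply]
  rw [subtype_sum n d (fun K => (if (I : Finset (Fin n)) \ S ⊆ K ∧ K ⊆ (I : Finset (Fin n))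
      then (-1 : ℝ) ^ ((K ∩ S).card) else 0) *
      (if K ⊆ symmDiff (J : Finset (Fin n)) S then 1 else 0))
    (by
      intro K hK
      rw [if_neg, zero_mul]
      rintro ⟨-, h2⟩
      exact hK (le_trans (Finset.card_le_card h2) I.2))]
  have hrw : ∀ K : Finset (Fin n),
      (if (I : Finset (Fin n)) \ S ⊆ K ∧ K ⊆ (I : Finset (Fin n))
        then (-1 : ℝ) ^ ((K ∩ S).card) else 0) *
      (if K ⊆ symmDiff (J : Finset (Fin n)) S then 1 else 0)
      = if ((I : Finset (Fin n)) \ S ⊆ K ∧ K ⊆ (I : Finset (Fin n))) ∧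
          K ⊆ symmDiff (J : Finset (Fin n)) S then (-1 : ℝ) ^ ((K ∩ S).card) else 0 := by
    intro K; split_ifs with h1 h2 h3 h4 <;> simp_all
  simp only [hrw]
  rw [← Finset.sum_filter]
  by_cases hC : (I : Finset (Fin n)) \ S ⊆ symmDiff (J : Finset (Fin n)) S
  · rw [Finset.sum_nbij' (i := fun K => K ∩ S) (j := fun T => ((I : Finset (Fin n)) \ S) ∪ T)
      (t := (((I : Finset (Fin n)) ∩ S) \ (J : Finset (Fin n))).powerset)
      (g := fun T => (-1 : ℝ) ^ T.card)]
    · rw [sum_neg_one_pow_real]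
      have hiff : ((I : Finset (Fin n)) ∩ S) \ (J : Finset (Fin n)) = ∅ ↔
          (I : Finset (Fin n)) ⊆ (J : Finset (Fin n)) := by
        rw [Finset.sdiff_eq_empty_iff_subset]
        constructor
        · intro h x hxI
          by_cases hxS : x ∈ S
          · exact h (Finset.mem_inter.2 ⟨hxI, hxS⟩)
          · have := hC (Finset.mem_sdiff.2 ⟨hxI, hxS⟩)
            rcases Finset.mem_symmDiff.1 this with ⟨h1, -⟩ | ⟨h1, -⟩
            · exact h1
            · exact absurd h1 hxS
        · intro h x hx
          exact h (Finset.mem_inter.1 hx).1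
      exact if_congr hiff rfl rfl
    · intro K hK
      simp only [Finset.mem_filter, Finset.mem_univ, true_and] at hK
      obtain ⟨⟨h1, h2⟩, h3⟩ := hK
      rw [Finset.mem_powerset]
      intro x hx
      rw [Finset.mem_inter] at hx
      rw [Finset.mem_sdiff, Finset.mem_inter]
      refine ⟨⟨h2 hx.1, hx.2⟩, ?_⟩
      intro hxJ
      rcases Finset.mem_symmDiff.1 (h3 hx.1) with ⟨-, h5⟩ | ⟨-, h5⟩
      · exact h5 hx.2
      · exact h5 hxJ
    · intro T hT
      rw [Finset.mem_powerset] at hT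
      simp only [Finset.mem_filter, Finset.mem_univ, true_and]
      have hTS : T ⊆ S := fun x hx => (Finset.mem_inter.1 (Finset.mem_sdiff.1 (hT hx)).1).2
      have hTI : T ⊆ (I : Finset (Fin n)) :=
        fun x hx => (Finset.mem_inter.1 (Finset.mem_sdiff.1 (hT hx)).1).1
      refine ⟨⟨Finset.subset_union_left, Finset.union_subset (Finset.sdiff_subset) hTI⟩, ?_⟩
      apply Finset.union_subset hC
      intro x hx
      have := Finset.mem_sdiff.1 (hT hx)
      exact Finset.mem_symmDiff.2 (Or.inr ⟨hTS hx, this.2⟩)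
    · intro K hK
      simp only [Finset.mem_filter, Finset.mem_univ, true_and] at hK
      obtain ⟨⟨h1, h2⟩, -⟩ := hK
      ext x
      simp only [Finset.mem_union, Finset.mem_sdiff, Finset.mem_inter]
      constructor
      · rintro (⟨hxI, hxS⟩ | ⟨hxK, -⟩)
        · exact h1 (Finset.mem_sdiff.2 ⟨hxI, hxS⟩)
        · exact hxK
      · intro hxK
        by_cases hxS : x ∈ S
        · exact Or.inr ⟨hxK, hxS⟩
        · exact Or.inl ⟨h2 hxK, hxS⟩
    · intro T hT
      rw [Finset.mem_powerset] at hT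
      have hTS : T ⊆ S := fun x hx => (Finset.mem_inter.1 (Finset.mem_sdiff.1 (hT hx)).1).2
      ext x
      simp only [Finset.mem_inter, Finset.mem_union, Finset.mem_sdiff]
      constructor
      · rintro ⟨⟨hxI, hxS⟩ | hxT, hxS'⟩
        · exact absurd hxS' hxS
        · exact hxT
      · intro hx
        exact ⟨Or.inr hx, hTS hx⟩
    · intro K _; rfl
  · rw [Finset.filter_false_of_mem, Finset.sum_empty]
    · rw [if_neg]
      intro hIJ
      apply hC
      intro x hx
      rw [Finset.mem_sdiff] at hx
      exact Finset.mem_symmDiff.2 (Or.inl ⟨hIJ hx.1, hx.2⟩)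
    · rintro K - ⟨⟨h1, -⟩, h3⟩
      exact absurd (fun x hx => h3 (h1 hx)) hC

lemma mulBZ (n d : ℕ) : Bmat n d * Zd n d = 1 := by
  ext I J
  simp only [mul_apply, Bmat, Zd, of_apply, Matrix.one_apply]
  rw [subtype_sum n d (fun K => (if (I : Finset (Fin n)) ⊆ K
      then (-1 : ℝ) ^ ((K \ (I : Finset (Fin n))).card) else 0) *
      (if K ⊆ (J : Finset (Fin n)) then 1 else 0))
    (by
      intro K hK
      rw [mul_ite, mul_one, mul_zero, if_neg]
      intro h2
      exact hK (le_trans (Finset.card_le_card h2) J.2))]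
  have hrw : ∀ K : Finset (Fin n),
      (if (I : Finset (Fin n)) ⊆ K then (-1 : ℝ) ^ ((K \ (I : Finset (Fin n))).card) else 0) *
      (if K ⊆ (J : Finset (Fin n)) then 1 else 0)
      = if (I : Finset (Fin n)) ⊆ K ∧ K ⊆ (J : Finset (Fin n))
        then (-1 : ℝ) ^ ((K \ (I : Finset (Fin n))).card) else 0 := by
    intro K; split_ifs with h1 h2 h3 h4 <;> simp_all
  simp only [hrw]
  rw [← Finset.sum_filter]
  by_cases hIJ : (I : Finset (Fin n)) ⊆ (J : Finset (Fin n))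
  · rw [Finset.sum_nbij' (i := fun K => K \ (I : Finset (Fin n)))
      (j := fun T => (I : Finset (Fin n)) ∪ T)
      (t := ((J : Finset (Fin n)) \ (I : Finset (Fin n))).powerset)
      (g := fun T => (-1 : ℝ) ^ T.card)]
    · rw [sum_neg_one_pow_real]
      have hiff : (J : Finset (Fin n)) \ (I : Finset (Fin n)) = ∅ ↔ I = J := by
        rw [Finset.sdiff_eq_empty_iff_subset]
        constructor
        · intro h; exact Subtype.ext (Finset.Subset.antisymm hIJ h)
        · rintro rfl; exact Finset.Subset.refl _
      exact if_congr hiff rfl rfl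
    · intro K hK
      simp only [Finset.mem_filter, Finset.mem_univ, true_and] at hK
      rw [Finset.mem_powerset]
      exact Finset.sdiff_subset_sdiff hK.2 (Finset.Subset.refl _)
    · intro T hT
      rw [Finset.mem_powerset] at hT
      simp only [Finset.mem_filter, Finset.mem_univ, true_and]
      exact ⟨Finset.subset_union_left,
        Finset.union_subset hIJ (hT.trans Finset.sdiff_subset)⟩
    · intro K hK
      simp only [Finset.mem_filter, Finset.mem_univ, true_and] at hK
      exact Finset.union_sdiff_of_subset hK.1
    · intro T hT
      rw [Finset.mem_powerset] at hT
      have : Disjoint (I : Finset (Fin n)) T :=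
        Finset.disjoint_left.2 fun x hxI hxT => (Finset.mem_sdiff.1 (hT hxT)).2 hxI
      rw [Finset.union_sdiff_cancel_left this]
    · intro K _; rfl
  · rw [Finset.filter_false_of_mem, Finset.sum_empty, if_neg]
    · rintro rfl; exact hIJ (Finset.Subset.refl _)
    · rintro K - ⟨h1, h2⟩
      exact hIJ (h1.trans h2)

theorem stmt_6 (n d : ℕ) (hd : d ≤ n) (S : Finset (Fin n)) :
    AdS n d S * ZdS n d S = Zd n d ∧
    IsUnit (ZdS n d S) ∧
    (ZdS n d S)⁻¹ = (Zd n d)⁻¹ * AdS n d S := by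
  have hAZ := mulAZ n d S
  have hBZ := mulBZ n d
  have hleft : (Bmat n d * AdS n d S) * ZdS n d S = 1 := by
    rw [mul_assoc, hAZ, hBZ]
  refine ⟨hAZ, (Matrix.isUnit_iff_isUnit_det _).2 (Matrix.isUnit_det_of_left_inverse hleft), ?_⟩
  rw [Matrix.inv_eq_left_inv hleft, Matrix.inv_eq_left_inv hBZ]
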